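/- Let X be a complex Hilbert space, λ ∈ ℂ⁺ fixed, and ε > 0 sufficiently small (specifically |ξ + iη| < exp(-2 max{1, |log λ|}) for |ξ| < ε, η ∈ [0, ε], and ε ≪ Im λ). Then there is a constant C(ε, λ) such that for all η ∈ [0, ε]: ∫_{-∞}^{+∞} |log(ξ + iη) - log λ|⁻² |ξ + iη|⁻¹ dξ ≤ C(ε, λ). -/

import Mathlib

open Complex MeasureTheory Set Filter
open scoped Topology ENNReal

section helpers

lemma aux_mono {a b : ℝ} (ha : 0 < a) (hab : a ≤ b) (hb : b ≤ Real.exp (-2)) :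
    a * Real.log a ^ 2 ≤ b * Real.log b ^ 2 := by
  have hb0 : 0 < b := lt_of_lt_of_le ha hab
  set u := -Real.log a with hu
  set v := -Real.log b with hv
  have hv2 : 2 ≤ v := by
    have h1 : Real.log b ≤ Real.log (Real.exp (-2)) := Real.log_le_log hb0 hb
    rw [Real.log_exp] at h1; simp only [hv]; linarith
  have huv : v ≤ u := by
    have := Real.log_le_log ha hab
    simp only [hu, hv]; linarith
  have hkey : u ≤ v * Real.exp ((u - v) / 2) := by
    have h1 : (u - v) / 2 + 1 ≤ Real.exp ((u - v) / 2) := Real.add_one_le_exp _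
    nlinarith [Real.exp_pos ((u-v)/2)]
  have hsq : u ^ 2 ≤ v ^ 2 * Real.exp (u - v) := by
    have hv0 : (0:ℝ) ≤ v := by linarith
    have hu0 : (0:ℝ) ≤ u := by linarith
    have := mul_self_le_mul_self hu0 hkey
    calc u ^ 2 = u * u := sq u
    _ ≤ (v * Real.exp ((u-v)/2)) * (v * Real.exp ((u-v)/2)) := this
    _ = v ^ 2 * (Real.exp ((u-v)/2) * Real.exp ((u-v)/2)) := by ring
    _ = v ^ 2 * Real.exp (u - v) := by rw [← Real.exp_add]; ring_nf
  have hea : a = Real.exp (-u) := by rw [hu, neg_neg, Real.exp_log ha]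
  have heb : b = Real.exp (-v) := by rw [hv, neg_neg, Real.exp_log hb0]
  have hla : Real.log a ^ 2 = u ^ 2 := by rw [hu]; ring
  have hlb : Real.log b ^ 2 = v ^ 2 := by rw [hv]; ring
  rw [hla, hlb, hea, heb]
  calc Real.exp (-u) * u ^ 2 ≤ Real.exp (-u) * (v ^ 2 * Real.exp (u - v)) :=
        mul_le_mul_of_nonneg_left hsq (Real.exp_pos _).le
  _ = Real.exp (-v) * v ^ 2 := by rw [mul_comm (v^2), ← mul_assoc, ← Real.exp_add]; ring_nf

lemma logdiff_lower {z l : ℂ} (hz : z ≠ 0) (hl : l ≠ 0) :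
    min 1 (‖z - l‖ / (2 * ‖l‖)) ≤
      ‖Complex.log z - Complex.log l‖ := by
  by_cases h : 1 ≤ ‖Complex.log z - Complex.log l‖
  · exact le_trans (min_le_left _ _) h
  push_neg at h
  refine le_trans (min_le_right _ _) ?_
  have h2 := Complex.norm_exp_sub_one_le (x := Complex.log z - Complex.log l) h.le
  rw [Complex.exp_sub, Complex.exp_log hz, Complex.exp_log hl] at h2
  have hl0 : 0 < ‖l‖ := norm_pos_iff.2 hl
  have hq : z / l - 1 = (z - l) / l := by field_simp
  rw [hq, norm_div] at h2
  rw [div_le_iff₀ (by positivity)] at h2 ⊢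
  linarith

lemma lint_Icc_le {a b B : ℝ} {F h : ℝ → ℝ} (hab : a ≤ b)
    (hcont : ContinuousOn h (Icc a b))
    (hpos : ∀ x ∈ Icc a b, 0 ≤ h x)
    (hF : ∀ x ∈ Icc a b, HasDerivAt F (h x) x)
    (hB : F b - F a ≤ B) :
    ∫⁻ x in Icc a b, ENNReal.ofReal (h x) ≤ ENNReal.ofReal B := by
  have hint : IntegrableOn h (Icc a b) := hcont.integrableOn_Icc
  rw [← MeasureTheory.ofReal_integral_eq_lintegral_ofReal hint
    ((ae_restrict_iff' measurableSet_Icc).2 (ae_of_all _ hpos))]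
  refine ENNReal.ofReal_le_ofReal ?_
  have h1 : ∫ x in Icc a b, h x = ∫ x in a..b, h x := by
    rw [intervalIntegral.integral_of_le hab, MeasureTheory.integral_Icc_eq_integral_Ioc]
  rw [h1, intervalIntegral.integral_eq_sub_of_hasDerivAt
    (fun x hx => hF x (by rwa [uIcc_of_le hab] at hx))
    ((hcont.mono (by rw [uIcc_of_le hab])).intervalIntegrable)]
  exact hB

lemma lint_Ioo_le {p q B : ℝ} {F h : ℝ → ℝ} (hpq : p < q)
    (hcont : ContinuousOn h (Ioo p q))
    (hpos : ∀ x ∈ Ioo p q, 0 ≤ h x)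
    (hF : ∀ x ∈ Ioo p q, HasDerivAt F (h x) x)
    (hB : ∀ a b, p < a → a ≤ b → b < q → F b - F a ≤ B) :
    ∫⁻ x in Ioo p q, ENNReal.ofReal (h x) ≤ ENNReal.ofReal B := by
  set d := q - p with hd
  have hd0 : 0 < d := by simp [hd]; linarith
  set A : ℕ → ℝ := fun n => p + d / (n + 2) with hA
  set Bb : ℕ → ℝ := fun n => q - d / (n + 2) with hBb
  have hAt : Tendsto A atTop (𝓝 p) := by
    have : Tendsto (fun n : ℕ => d / (n + 2)) atTop (𝓝 0) := by
      apply Tendsto.div_atTop tendsto_const_nhds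
      exact tendsto_atTop_add_const_right _ 2 tendsto_natCast_atTop_atTop
    simpa using tendsto_const_nhds.add this
  have hBt : Tendsto Bb atTop (𝓝 q) := by
    have : Tendsto (fun n : ℕ => d / (n + 2)) atTop (𝓝 0) := by
      apply Tendsto.div_atTop tendsto_const_nhds
      exact tendsto_atTop_add_const_right _ 2 tendsto_natCast_atTop_atTop
    simpa using tendsto_const_nhds.sub this
  have hcover := MeasureTheory.aecover_Ioo_of_Icc (μ := volume) (l := atTop) hAt hBt
  have hmeas : AEMeasurable (fun x => ENNReal.ofReal (h x)) (volume.restrict (Ioo p q)) :=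
    ENNReal.measurable_ofReal.comp_aemeasurable (hcont.aemeasurable measurableSet_Ioo)
  have htend := hcover.lintegral_tendsto_of_countably_generated hmeas
  refine le_of_tendsto htend (Eventually.of_forall fun n => ?_)
  have hdn : 0 < d / (n + 2) := by positivity
  have hsub : Icc (A n) (Bb n) ⊆ Ioo p q := by
    apply Icc_subset_Ioo <;> simp [hA, hBb] <;> linarith [hdn]
  have hdn2 : d / (n + 2) ≤ d / 2 :=
    div_le_div_of_nonneg_left hd0.le (by norm_num) (by linarith [Nat.cast_nonneg (α := ℝ) n])
  have hab : A n ≤ Bb n := by simp only [hA, hBb]; linarith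
  calc ∫⁻ x in Icc (A n) (Bb n), ENNReal.ofReal (h x) ∂(volume.restrict (Ioo p q))
      ≤ ∫⁻ x in Icc (A n) (Bb n), ENNReal.ofReal (h x) :=
        lintegral_mono' (Measure.restrict_mono_measure Measure.restrict_le_self _) le_rfl
  _ ≤ ENNReal.ofReal B := by
      apply lint_Icc_le hab (hcont.mono hsub) (fun x hx => hpos x (hsub hx))
        (fun x hx => hF x (hsub hx))
      exact hB _ _ (hsub (left_mem_Icc.2 hab)).1 hab (hsub (right_mem_Icc.2 hab)).2

lemma lint_Ioi_le {p B : ℝ} {F h : ℝ → ℝ}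
    (hcont : ContinuousOn h (Ioi p))
    (hpos : ∀ x ∈ Ioi p, 0 ≤ h x)
    (hF : ∀ x ∈ Ioi p, HasDerivAt F (h x) x)
    (hB : ∀ a b, p < a → a ≤ b → F b - F a ≤ B) :
    ∫⁻ x in Ioi p, ENNReal.ofReal (h x) ≤ ENNReal.ofReal B := by
  set A : ℕ → ℝ := fun n => p + 1 / (n + 1) with hA
  set Bb : ℕ → ℝ := fun n => p + 1 + n with hBb
  have hAt : Tendsto A atTop (𝓝 p) := by
    have : Tendsto (fun n : ℕ => (1:ℝ) / (n + 1)) atTop (𝓝 0) := by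
      apply Tendsto.div_atTop tendsto_const_nhds
      exact tendsto_atTop_add_const_right _ 1 tendsto_natCast_atTop_atTop
    have h0 : Tendsto (fun n : ℕ => p + 1/((n:ℝ)+1)) atTop (𝓝 (p + 0)) :=
      tendsto_const_nhds.add this
    simpa [hA, one_div] using h0
  have hBt : Tendsto Bb atTop atTop := by
    apply tendsto_atTop_add_const_left
    exact tendsto_natCast_atTop_atTop
  have hcover := (MeasureTheory.aecover_Ioi_of_Ici (μ := volume) (l := atTop) hAt).inter
    ((MeasureTheory.aecover_Iic (μ := volume.restrict (Ioi p)) hBt).mono le_rfl)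
  have hcover' : AECover (volume.restrict (Ioi p)) atTop (fun n => Icc (A n) (Bb n)) := by
    simpa [Set.Ici_inter_Iic] using hcover
  have hmeas : AEMeasurable (fun x => ENNReal.ofReal (h x)) (volume.restrict (Ioi p)) :=
    ENNReal.measurable_ofReal.comp_aemeasurable (hcont.aemeasurable measurableSet_Ioi)
  have htend := hcover'.lintegral_tendsto_of_countably_generated hmeas
  refine le_of_tendsto htend (Eventually.of_forall fun n => ?_)
  have h1 : (0:ℝ) < 1 / ((n:ℝ) + 1) := by positivity
  have h2 : (1:ℝ) / ((n:ℝ) + 1) ≤ 1 := by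
    rw [div_le_one (by positivity)]; linarith [Nat.cast_nonneg (α := ℝ) n]
  have hab : A n ≤ Bb n := by simp only [hA, hBb]; linarith [Nat.cast_nonneg (α := ℝ) n]
  have hsub : Icc (A n) (Bb n) ⊆ Ioi p := fun x hx =>
    lt_of_lt_of_le (by simp [hA]; linarith) hx.1
  calc ∫⁻ x in Icc (A n) (Bb n), ENNReal.ofReal (h x) ∂(volume.restrict (Ioi p))
      ≤ ∫⁻ x in Icc (A n) (Bb n), ENNReal.ofReal (h x) :=
        lintegral_mono' (Measure.restrict_mono_measure Measure.restrict_le_self _) le_rfl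
  _ ≤ ENNReal.ofReal B := by
      apply lint_Icc_le hab (hcont.mono hsub) (fun x hx => hpos x (hsub hx))
        (fun x hx => hF x (hsub hx))
      exact hB _ _ (hsub (left_mem_Icc.2 hab)) hab

lemma lint_Iio_le {q B : ℝ} {F h : ℝ → ℝ}
    (hcont : ContinuousOn h (Iio q))
    (hpos : ∀ x ∈ Iio q, 0 ≤ h x)
    (hF : ∀ x ∈ Iio q, HasDerivAt F (h x) x)
    (hB : ∀ a b, a ≤ b → b < q → F b - F a ≤ B) :
    ∫⁻ x in Iio q, ENNReal.ofReal (h x) ≤ ENNReal.ofReal B := by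
  set A : ℕ → ℝ := fun n => q - 1 - n with hA
  set Bb : ℕ → ℝ := fun n => q - 1 / (n + 1) with hBb
  have hAt : Tendsto A atTop atBot := by
    have h0 : Tendsto (fun n : ℕ => (q-1) + -(n:ℝ)) atTop atBot :=
      tendsto_atBot_add_const_left _ _ (tendsto_neg_atTop_atBot.comp tendsto_natCast_atTop_atTop)
    have he : A = fun n : ℕ => (q-1) + -(n:ℝ) := by funext n; simp [hA]; ring
    rwa [he]
  have hBt : Tendsto Bb atTop (𝓝 q) := by
    have : Tendsto (fun n : ℕ => (1:ℝ) / (n + 1)) atTop (𝓝 0) := by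
      apply Tendsto.div_atTop tendsto_const_nhds
      exact tendsto_atTop_add_const_right _ 1 tendsto_natCast_atTop_atTop
    have h0 : Tendsto (fun n : ℕ => q - 1/((n:ℝ)+1)) atTop (𝓝 (q - 0)) :=
      tendsto_const_nhds.sub this
    simpa [hBb, one_div] using h0
  have hcover := (MeasureTheory.aecover_Iio_of_Iic (μ := volume) (l := atTop) hBt).inter
    ((MeasureTheory.aecover_Ici (μ := volume.restrict (Iio q)) hAt).mono le_rfl)
  have hcover' : AECover (volume.restrict (Iio q)) atTop (fun n => Icc (A n) (Bb n)) := by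
    have he : (fun n => Iic (Bb n) ∩ Ici (A n)) = fun n => Icc (A n) (Bb n) := by
      funext n; rw [Set.inter_comm, Set.Ici_inter_Iic]
    rwa [he] at hcover
  have hmeas : AEMeasurable (fun x => ENNReal.ofReal (h x)) (volume.restrict (Iio q)) :=
    ENNReal.measurable_ofReal.comp_aemeasurable (hcont.aemeasurable measurableSet_Iio)
  have htend := hcover'.lintegral_tendsto_of_countably_generated hmeas
  refine le_of_tendsto htend (Eventually.of_forall fun n => ?_)
  have h1 : (0:ℝ) < 1 / ((n:ℝ) + 1) := by positivity
  have h2 : (1:ℝ) / ((n:ℝ) + 1) ≤ 1 := by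
    rw [div_le_one (by positivity)]; linarith [Nat.cast_nonneg (α := ℝ) n]
  have hab : A n ≤ Bb n := by simp only [hA, hBb]; linarith [Nat.cast_nonneg (α := ℝ) n]
  have hsub : Icc (A n) (Bb n) ⊆ Iio q := fun x hx =>
    lt_of_le_of_lt hx.2 (by simp [hBb]; linarith)
  calc ∫⁻ x in Icc (A n) (Bb n), ENNReal.ofReal (h x) ∂(volume.restrict (Iio q))
      ≤ ∫⁻ x in Icc (A n) (Bb n), ENNReal.ofReal (h x) :=
        lintegral_mono' (Measure.restrict_mono_measure Measure.restrict_le_self _) le_rfl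
  _ ≤ ENNReal.ofReal B := by
      apply lint_Icc_le hab (hcont.mono hsub) (fun x hx => hpos x (hsub hx))
        (fun x hx => hF x (hsub hx))
      exact hB _ _ hab (hsub (right_mem_Icc.2 hab))

end helpers

set_option maxHeartbeats 2000000 in
/-- for fixed `λ ∈ ℂ⁺` and sufficiently small `ε > 0` (so that
`|ξ + iη| < exp(-2 max{1, |log λ|})` for `|ξ| < ε`, `η ∈ [0, ε]`, and `ε < Im λ`),
the integrals `∫_ℝ |log(ξ + iη) - log λ|⁻² |ξ + iη|⁻¹ dξ` are bounded uniformly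
in `η ∈ [0, ε]`. -/
theorem stmt7 (l : ℂ) (hl : 0 < l.im) (ε : ℝ) (hε : 0 < ε) (hεim : ε < l.im)
    (hsmall : ∀ ξ η : ℝ, |ξ| < ε → η ∈ Set.Icc 0 ε →
      ‖(ξ : ℂ) + η * Complex.I‖
        < Real.exp (-2 * max 1 (‖Complex.log l‖))) :
    ∃ C : ℝ, ∀ η ∈ Set.Icc (0:ℝ) ε,
      ∫⁻ ξ : ℝ, ENNReal.ofReal
          ((‖Complex.log ((ξ : ℂ) + η * Complex.I) - Complex.log l‖ ^ 2
            * ‖(ξ : ℂ) + η * Complex.I‖)⁻¹)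
        ≤ ENNReal.ofReal C := by
  have hl0 : l ≠ 0 := fun h => by simp [h] at hl
  set A := ‖l‖ with hA
  have hA0 : 0 < A := by
    rw [hA]; exact norm_pos_iff.2 hl0
  set M := max 1 (‖Complex.log l‖) with hM
  have hM1 : (1:ℝ) ≤ M := le_max_left _ _
  have hMl : ‖Complex.log l‖ ≤ M := le_max_right _ _
  have hεδ : ε ≤ Real.exp (-2 * M) := by
    by_contra hcon
    push_neg at hcon
    have h2 := hsmall (Real.exp (-2 * M)) 0
      (by rwa [abs_of_pos (Real.exp_pos _)]) ⟨le_refl 0, hε.le⟩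
    rw [Complex.ofReal_zero, zero_mul, add_zero, Complex.norm_real, Real.norm_eq_abs,
      abs_of_pos (Real.exp_pos _)] at h2
    exact lt_irrefl _ h2
  have he2lt1 : Real.exp (-2:ℝ) < 1 := by
    rw [Real.exp_lt_one_iff]; norm_num
  have hεe2 : ε ≤ Real.exp (-2) := hεδ.trans (Real.exp_le_exp.2 (by linarith))
  have hlogε : Real.log ε ≤ -2 := by
    have := Real.log_le_log hε hεe2
    rwa [Real.log_exp] at this
  set c := min 1 ((l.im - ε) / (2 * A)) with hc
  have hc0 : 0 < c := lt_min one_pos (div_pos (by linarith) (by positivity))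
  set R := max ε (Real.exp 1 * A) with hR
  have hεR : ε ≤ R := le_max_left _ _
  have hR0 : 0 < R := lt_of_lt_of_le hε hεR
  have hRA : Real.exp 1 * A ≤ R := le_max_right _ _
  have hlogRA : 1 ≤ Real.log (R / A) := by
    have h1 : Real.exp 1 ≤ R / A := (le_div_iff₀ hA0).2 hRA
    have := Real.log_le_log (Real.exp_pos 1) h1
    rwa [Real.log_exp] at this
  set K := (c ^ 2 * ε)⁻¹ with hK
  have hK0 : 0 ≤ K := by positivity
  set B1 := 4 * (-Real.log ε)⁻¹ with hB1
  have hlogε0 : 0 < -Real.log ε := by linarith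
  have hB10 : 0 ≤ B1 := by rw [hB1]; positivity
  set B3 := (Real.log (R / A))⁻¹ with hB3
  have hB30 : 0 ≤ B3 := by rw [hB3]; positivity
  have hKR0 : 0 ≤ K * (R - ε) := mul_nonneg hK0 (by linarith)
  refine ⟨B3 + K * (R - ε) + (B1 + B1) + K * (R - ε) + B3, fun η hη => ?_⟩
  have hη0 : 0 ≤ η := hη.1
  have hηε : η ≤ ε := hη.2
  -- basic facts about z = ξ + ηI
  have habs_ge : ∀ ξ : ℝ, |ξ| ≤ ‖(ξ:ℂ) + η * Complex.I‖ := by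
    intro ξ
    have h := Complex.abs_re_le_norm ((ξ:ℂ) + η * Complex.I)
    simpa using h
  have hne : ∀ ξ : ℝ, ε ≤ |ξ| → ((ξ:ℂ) + η * Complex.I) ≠ 0 := by
    intro ξ hξ h0
    have h := habs_ge ξ
    rw [h0, norm_zero] at h
    linarith
  -- pointwise bound on the small region
  have hsb : ∀ ξ : ℝ, ξ ≠ 0 → |ξ| < ε →
      (‖Complex.log ((ξ:ℂ) + η * Complex.I) - Complex.log l‖ ^ 2
        * ‖(ξ:ℂ) + η * Complex.I‖)⁻¹ ≤ 4 * (|ξ| * Real.log |ξ| ^ 2)⁻¹ := by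
    intro ξ hξ0 hξε
    set z := (ξ:ℂ) + η * Complex.I with hz
    set r := ‖z‖ with hr
    have hξpos : 0 < |ξ| := abs_pos.2 hξ0
    have hr1 : |ξ| ≤ r := habs_ge ξ
    have hr0 : 0 < r := lt_of_lt_of_le hξpos hr1
    have hrδ : r < Real.exp (-2 * M) := hsmall ξ η hξε hη
    have hlogr : Real.log r < -2 * M := by
      have := Real.log_lt_log hr0 hrδ
      rwa [Real.log_exp] at this
    have hlz : -Real.log r ≤ ‖Complex.log z‖ := by
      have h := Complex.abs_re_le_norm (Complex.log z)
      rw [Complex.log_re] at h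
      calc -Real.log r ≤ |Real.log (‖z‖)| := by rw [← hr]; exact neg_le_abs _
      _ ≤ _ := h
    have htri : ‖Complex.log z‖ - ‖Complex.log l‖
        ≤ ‖Complex.log z - Complex.log l‖ := by
      simpa using norm_sub_norm_le (Complex.log z) (Complex.log l)
    have hΔ : -Real.log r / 2 ≤ ‖Complex.log z - Complex.log l‖ := by linarith
    have hΔ0 : (0:ℝ) ≤ -Real.log r / 2 := by linarith
    have e1 : (-Real.log r / 2) ^ 2 ≤ ‖Complex.log z - Complex.log l‖ ^ 2 :=
      pow_le_pow_left₀ hΔ0 hΔ 2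
    have e2 : |ξ| * Real.log |ξ| ^ 2 ≤ r * Real.log r ^ 2 :=
      aux_mono hξpos hr1 (le_trans hrδ.le (Real.exp_le_exp.2 (by linarith)))
    have e3 : Real.log r ^ 2 / 4 * r ≤ ‖Complex.log z - Complex.log l‖ ^ 2 * r := by
      apply mul_le_mul_of_nonneg_right _ hr0.le
      calc Real.log r ^ 2 / 4 = (-Real.log r / 2) ^ 2 := by ring
      _ ≤ _ := e1
    have hlξ : Real.log |ξ| < 0 :=
      Real.log_neg hξpos (lt_of_lt_of_le hξε (hεe2.trans he2lt1.le))
    have hlξ2 : 0 < Real.log |ξ| ^ 2 := by nlinarith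
    have hden : 0 < |ξ| * Real.log |ξ| ^ 2 / 4 := by
      apply div_pos (mul_pos hξpos hlξ2); norm_num
    have h4 := inv_anti₀ hden
      (by linarith : |ξ| * Real.log |ξ| ^ 2 / 4
        ≤ ‖Complex.log z - Complex.log l‖ ^ 2 * r)
    calc (‖Complex.log z - Complex.log l‖ ^ 2 * r)⁻¹
        ≤ (|ξ| * Real.log |ξ| ^ 2 / 4)⁻¹ := h4
    _ = 4 * (|ξ| * Real.log |ξ| ^ 2)⁻¹ := by
        rw [inv_div, div_eq_mul_inv]
  -- pointwise bound on the middle region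
  have hmb : ∀ ξ : ℝ, ε ≤ |ξ| →
      (‖Complex.log ((ξ:ℂ) + η * Complex.I) - Complex.log l‖ ^ 2
        * ‖(ξ:ℂ) + η * Complex.I‖)⁻¹ ≤ K := by
    intro ξ hξ
    set z := (ξ:ℂ) + η * Complex.I with hz
    have hz0 : z ≠ 0 := hne ξ hξ
    have himz : (z - l).im = η - l.im := by simp [hz]
    have habs1 : l.im - ε ≤ ‖z - l‖ := by
      have h := Complex.abs_im_le_norm (z - l)
      rw [himz] at h
      have h2 : |η - l.im| = l.im - η := by rw [abs_of_nonpos (by linarith)]; ring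
      rw [h2] at h
      linarith
    have hcΔ : c ≤ ‖Complex.log z - Complex.log l‖ := by
      refine le_trans (min_le_min (le_refl (1:ℝ)) ?_) (logdiff_lower hz0 hl0)
      gcongr
    have hrε : ε ≤ ‖z‖ := le_trans hξ (habs_ge ξ)
    have hprod : c ^ 2 * ε ≤ ‖Complex.log z - Complex.log l‖ ^ 2 * ‖z‖ :=
      mul_le_mul (pow_le_pow_left₀ hc0.le hcΔ 2) hrε hε.le (by positivity)
    rw [hK]
    exact inv_anti₀ (by positivity) hprod
  -- pointwise bound on the outer region
  have hob : ∀ ξ : ℝ, R < |ξ| →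
      (‖Complex.log ((ξ:ℂ) + η * Complex.I) - Complex.log l‖ ^ 2
        * ‖(ξ:ℂ) + η * Complex.I‖)⁻¹ ≤ (Real.log (|ξ| / A) ^ 2 * |ξ|)⁻¹ := by
    intro ξ hξ
    set z := (ξ:ℂ) + η * Complex.I with hz
    have hξpos : 0 < |ξ| := lt_trans hR0 hξ
    have hr1 : |ξ| ≤ ‖z‖ := habs_ge ξ
    have hlRA' : Real.log (R / A) ≤ Real.log (|ξ| / A) :=
      Real.log_le_log (by positivity) (by gcongr)
    have hlog1 : 1 ≤ Real.log (|ξ| / A) := le_trans hlogRA hlRA'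
    have hre : Real.log (|ξ| / A) ≤ (Complex.log z - Complex.log l).re := by
      rw [Complex.sub_re, Complex.log_re, Complex.log_re, ← hA,
        Real.log_div (ne_of_gt hξpos) (ne_of_gt hA0)]
      have := Real.log_le_log hξpos hr1
      linarith
    have hΔ : Real.log (|ξ| / A) ≤ ‖Complex.log z - Complex.log l‖ :=
      le_trans hre (le_trans (le_abs_self _) (Complex.abs_re_le_norm _))
    have hprod : Real.log (|ξ| / A) ^ 2 * |ξ|
        ≤ ‖Complex.log z - Complex.log l‖ ^ 2 * ‖z‖ :=
      mul_le_mul (pow_le_pow_left₀ (by linarith) hΔ 2) hr1 hξpos.le (by positivity)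
    exact inv_anti₀ (mul_pos (pow_pos (by linarith) 2) hξpos) hprod
  -- helper for outer region logs
  have hlg : ∀ x : ℝ, R < x → 1 ≤ Real.log (x / A) := by
    intro x hx
    refine le_trans hlogRA (Real.log_le_log (by positivity) ?_)
    gcongr
  -- the five integral estimates
  have hI5 : ∫⁻ ξ in Ioi R, ENNReal.ofReal
      ((‖Complex.log ((ξ:ℂ) + η * Complex.I) - Complex.log l‖ ^ 2
        * ‖(ξ:ℂ) + η * Complex.I‖)⁻¹) ≤ ENNReal.ofReal B3 := by
    have hmono : ∫⁻ ξ in Ioi R, ENNReal.ofReal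
        ((‖Complex.log ((ξ:ℂ) + η * Complex.I) - Complex.log l‖ ^ 2
          * ‖(ξ:ℂ) + η * Complex.I‖)⁻¹)
        ≤ ∫⁻ ξ in Ioi R, ENNReal.ofReal ((Real.log (ξ / A) ^ 2 * ξ)⁻¹) := by
      refine setLIntegral_mono' measurableSet_Ioi fun ξ hξ => ENNReal.ofReal_le_ofReal ?_
      have hξ' : R < |ξ| := by rwa [abs_of_pos (lt_trans hR0 hξ)]
      have h := hob ξ hξ'
      rwa [abs_of_pos (lt_trans hR0 hξ)] at h
    refine le_trans hmono ?_
    have hlogcont : ContinuousOn (fun x : ℝ => Real.log (x / A)) (Ioi R) :=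
      Real.continuousOn_log.comp ((continuous_id.div_const A).continuousOn)
        (fun x hx => by
          simp only [Set.mem_compl_iff, Set.mem_singleton_iff, id]
          exact div_ne_zero (ne_of_gt (lt_trans hR0 hx)) (ne_of_gt hA0))
    apply lint_Ioi_le (F := fun x => -(Real.log (x / A))⁻¹)
    · exact ((hlogcont.pow 2).mul continuousOn_id).inv₀ fun x hx =>
        ne_of_gt (mul_pos (pow_pos (by linarith [hlg x hx]) 2) (lt_trans hR0 hx))
    · intro x hx
      have hx0 : (0:ℝ) < x := lt_trans hR0 (Set.mem_Ioi.1 hx)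
      exact inv_nonneg.2 (mul_nonneg (sq_nonneg _) hx0.le)
    · intro x hx
      have hx0 : 0 < x := lt_trans hR0 hx
      have hxA : 0 < x / A := by positivity
      have hlgx : 1 ≤ Real.log (x / A) := hlg x hx
      have hlgne : Real.log (x / A) ≠ 0 := by linarith
      have d1 : HasDerivAt (fun y : ℝ => y / A) (1 / A) x := (hasDerivAt_id x).div_const A
      have d2 : HasDerivAt (fun y : ℝ => Real.log (y / A)) ((x / A)⁻¹ * (1 / A)) x :=
        by have := (Real.hasDerivAt_log (ne_of_gt hxA)).comp x d1; exact this
      have d3 := (d2.inv hlgne).neg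
      refine d3.congr_deriv ?_
      have hA' : A ≠ 0 := ne_of_gt hA0
      have hx' : x ≠ 0 := ne_of_gt hx0
      field_simp
    · intro a b ha hab
      have h1a : 1 ≤ Real.log (a / A) := hlg a ha
      have h1b : 1 ≤ Real.log (b / A) := hlg b (lt_of_lt_of_le ha hab)
      have h2 : (Real.log (a / A))⁻¹ ≤ B3 := by
        rw [hB3]
        exact inv_anti₀ (by linarith) (Real.log_le_log (by positivity) (by gcongr))
      have h3 : (0:ℝ) ≤ (Real.log (b / A))⁻¹ := inv_nonneg.2 (by linarith)
      linarith
  have hI1 : ∫⁻ ξ in Iio (-R), ENNReal.ofReal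
      ((‖Complex.log ((ξ:ℂ) + η * Complex.I) - Complex.log l‖ ^ 2
        * ‖(ξ:ℂ) + η * Complex.I‖)⁻¹) ≤ ENNReal.ofReal B3 := by
    have hmono : ∫⁻ ξ in Iio (-R), ENNReal.ofReal
        ((‖Complex.log ((ξ:ℂ) + η * Complex.I) - Complex.log l‖ ^ 2
          * ‖(ξ:ℂ) + η * Complex.I‖)⁻¹)
        ≤ ∫⁻ ξ in Iio (-R), ENNReal.ofReal ((Real.log (-ξ / A) ^ 2 * (-ξ))⁻¹) := by
      refine setLIntegral_mono' measurableSet_Iio fun ξ hξ => ENNReal.ofReal_le_ofReal ?_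
      have h' := Set.mem_Iio.1 hξ
      have hξneg : ξ < 0 := by linarith
      have hξ' : R < |ξ| := by rw [abs_of_neg hξneg]; linarith
      have h := hob ξ hξ'
      rwa [abs_of_neg hξneg] at h
    refine le_trans hmono ?_
    have hlogcont : ContinuousOn (fun x : ℝ => Real.log (-x / A)) (Iio (-R)) :=
      Real.continuousOn_log.comp ((continuous_id.neg.div_const A).continuousOn)
        (fun x hx => by
          simp only [Set.mem_compl_iff, Set.mem_singleton_iff, id]
          have hx0 : x < 0 := by have h' := Set.mem_Iio.1 hx; linarith
          exact div_ne_zero (by simpa using ne_of_gt (neg_pos.2 hx0)) (ne_of_gt hA0))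
    apply lint_Iio_le (F := fun x => (Real.log (-x / A))⁻¹)
    · refine ((hlogcont.pow 2).mul (continuousOn_id.neg)).inv₀ fun x hx => ?_
      have hx0 : x < 0 := by have h' := Set.mem_Iio.1 hx; linarith
      have hRx : R < -x := by have h' := Set.mem_Iio.1 hx; linarith
      exact ne_of_gt (mul_pos (pow_pos (by linarith [hlg (-x) hRx]) 2) (show (0:ℝ) < -x by linarith))
    · intro x hx
      have hx0 : x < 0 := by have h' := Set.mem_Iio.1 hx; linarith
      exact inv_nonneg.2 (mul_nonneg (sq_nonneg _) (by linarith))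
    · intro x hx
      have hx0 : x < 0 := by have h' := Set.mem_Iio.1 hx; linarith
      have hRx : R < -x := by have h' := Set.mem_Iio.1 hx; linarith
      have hxA : 0 < -x / A := div_pos (by linarith) hA0
      have hlgx : 1 ≤ Real.log (-x / A) := hlg (-x) hRx
      have hlgne : Real.log (-x / A) ≠ 0 := by linarith
      have d1 : HasDerivAt (fun y : ℝ => -y / A) (-1 / A) x := ((hasDerivAt_id x).neg).div_const A
      have d2 : HasDerivAt (fun y : ℝ => Real.log (-y / A)) ((-x / A)⁻¹ * (-1 / A)) x :=
        by have := (Real.hasDerivAt_log (ne_of_gt hxA)).comp x d1; exact this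
      have d3 := d2.inv hlgne
      refine d3.congr_deriv ?_
      have hA' : A ≠ 0 := ne_of_gt hA0
      have hx' : x ≠ 0 := ne_of_lt hx0
      field_simp
    · intro a b hab hb
      have hbR : R < -b := by linarith
      have haR : R < -a := by linarith
      have h1a : 1 ≤ Real.log (-a / A) := hlg (-a) haR
      have h1b : 1 ≤ Real.log (-b / A) := hlg (-b) hbR
      have h2 : (Real.log (-b / A))⁻¹ ≤ B3 := by
        rw [hB3]
        exact inv_anti₀ (by linarith) (Real.log_le_log (by positivity) (by gcongr))
      have h3 : (0:ℝ) ≤ (Real.log (-a / A))⁻¹ := inv_nonneg.2 (by linarith)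
      linarith
  have hI4 : ∫⁻ ξ in Icc ε R, ENNReal.ofReal
      ((‖Complex.log ((ξ:ℂ) + η * Complex.I) - Complex.log l‖ ^ 2
        * ‖(ξ:ℂ) + η * Complex.I‖)⁻¹) ≤ ENNReal.ofReal (K * (R - ε)) := by
    have hmono : ∫⁻ ξ in Icc ε R, ENNReal.ofReal
        ((‖Complex.log ((ξ:ℂ) + η * Complex.I) - Complex.log l‖ ^ 2
          * ‖(ξ:ℂ) + η * Complex.I‖)⁻¹)
        ≤ ∫⁻ _ in Icc ε R, ENNReal.ofReal K := by
      refine setLIntegral_mono' measurableSet_Icc fun ξ hξ => ENNReal.ofReal_le_ofReal ?_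
      refine hmb ξ ?_
      rw [abs_of_pos (lt_of_lt_of_le hε hξ.1)]
      exact hξ.1
    refine le_trans hmono ?_
    rw [setLIntegral_const, Real.volume_Icc, ← ENNReal.ofReal_mul hK0]
  have hI2 : ∫⁻ ξ in Icc (-R) (-ε), ENNReal.ofReal
      ((‖Complex.log ((ξ:ℂ) + η * Complex.I) - Complex.log l‖ ^ 2
        * ‖(ξ:ℂ) + η * Complex.I‖)⁻¹) ≤ ENNReal.ofReal (K * (R - ε)) := by
    have hmono : ∫⁻ ξ in Icc (-R) (-ε), ENNReal.ofReal
        ((‖Complex.log ((ξ:ℂ) + η * Complex.I) - Complex.log l‖ ^ 2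
          * ‖(ξ:ℂ) + η * Complex.I‖)⁻¹)
        ≤ ∫⁻ _ in Icc (-R) (-ε), ENNReal.ofReal K := by
      refine setLIntegral_mono' measurableSet_Icc fun ξ hξ => ENNReal.ofReal_le_ofReal ?_
      refine hmb ξ ?_
      have hξ0 : ξ < 0 := lt_of_le_of_lt hξ.2 (by linarith)
      rw [abs_of_neg hξ0]
      linarith [hξ.2]
    refine le_trans hmono ?_
    rw [setLIntegral_const, Real.volume_Icc, ← ENNReal.ofReal_mul hK0]
    have he : -ε - -R = R - ε := by ring
    rw [he]
  have hI3 : ∫⁻ ξ in Ioo (-ε) ε, ENNReal.ofReal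
      ((‖Complex.log ((ξ:ℂ) + η * Complex.I) - Complex.log l‖ ^ 2
        * ‖(ξ:ℂ) + η * Complex.I‖)⁻¹) ≤ ENNReal.ofReal (B1 + B1) := by
    have hsubset : Ioo (-ε) ε ⊆ (Ioo (-ε) 0 ∪ Ioo 0 ε) ∪ {0} := by
      intro x hx
      rcases lt_trichotomy x 0 with h|h|h
      · exact Or.inl (Or.inl ⟨hx.1, h⟩)
      · exact Or.inr (by simp [h])
      · exact Or.inl (Or.inr ⟨h, hx.2⟩)
    refine le_trans (lintegral_mono_set hsubset) ?_
    refine le_trans (lintegral_union_le _ _ _) ?_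
    have hz0 : ∫⁻ ξ in ({0}:Set ℝ), ENNReal.ofReal
        ((‖Complex.log ((ξ:ℂ) + η * Complex.I) - Complex.log l‖ ^ 2
          * ‖(ξ:ℂ) + η * Complex.I‖)⁻¹) = 0 :=
      setLIntegral_measure_zero _ _ Real.volume_singleton
    rw [hz0, add_zero]
    refine le_trans (lintegral_union_le _ _ _) ?_
    rw [ENNReal.ofReal_add hB10 hB10]
    refine add_le_add ?_ ?_
    · -- negative small piece
      have hmono : ∫⁻ ξ in Ioo (-ε) 0, ENNReal.ofReal
          ((‖Complex.log ((ξ:ℂ) + η * Complex.I) - Complex.log l‖ ^ 2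
            * ‖(ξ:ℂ) + η * Complex.I‖)⁻¹)
          ≤ ∫⁻ ξ in Ioo (-ε) 0, ENNReal.ofReal (4 * (-ξ * Real.log (-ξ) ^ 2)⁻¹) := by
        refine setLIntegral_mono' measurableSet_Ioo fun ξ hξ => ENNReal.ofReal_le_ofReal ?_
        have h := hsb ξ (ne_of_lt hξ.2) (by rw [abs_of_neg hξ.2]; linarith [hξ.1])
        rwa [abs_of_neg hξ.2] at h
      refine le_trans hmono ?_
      have hlne : ∀ x : ℝ, -ε < x → x < 0 → Real.log (-x) < 0 := by
        intro x h1 h2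
        exact Real.log_neg (by linarith) (by linarith [hεe2.trans he2lt1.le])
      have hlogcont : ContinuousOn (fun x : ℝ => Real.log (-x)) (Ioo (-ε) 0) :=
        Real.continuousOn_log.comp (continuous_id.neg.continuousOn)
          (fun x hx => by
            simp only [Set.mem_compl_iff, Set.mem_singleton_iff, id]
            exact ne_of_gt (by simpa using neg_pos.2 hx.2))
      apply lint_Ioo_le (by linarith : -ε < (0:ℝ)) (F := fun x => 4 * (Real.log (-x))⁻¹)
      · refine continuousOn_const.mul (((continuousOn_id.neg).mul (hlogcont.pow 2)).inv₀
          fun x hx => ?_)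
        have := hlne x hx.1 hx.2
        exact ne_of_gt (mul_pos (by simpa using neg_pos.2 hx.2) (by simp only [Pi.pow_apply]; nlinarith))
      · intro x hx
        exact mul_nonneg (by norm_num)
          (inv_nonneg.2 (mul_nonneg (by linarith [hx.2]) (sq_nonneg _)))
      · intro x hx
        have hx0 : x < 0 := hx.2
        have h0x : (0:ℝ) < -x := neg_pos.2 hx0
        have hlgne : Real.log (-x) ≠ 0 := ne_of_lt (hlne x hx.1 hx.2)
        have d1 : HasDerivAt (fun y : ℝ => -y) (-1) x := (hasDerivAt_id x).neg
        have d2 : HasDerivAt (fun y : ℝ => Real.log (-y)) ((-x)⁻¹ * -1) x :=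
          (Real.hasDerivAt_log (ne_of_gt h0x)).comp x d1
        have d3 := (d2.inv hlgne).const_mul (4:ℝ)
        refine d3.congr_deriv ?_
        have hx' : x ≠ 0 := ne_of_lt hx0
        field_simp
      · intro a b ha hab hb
        have hla : Real.log (-a) < 0 := hlne a ha (lt_of_le_of_lt hab hb)
        have hlb : Real.log (-b) < 0 := hlne b (by linarith) hb
        have hlaε : Real.log (-a) ≤ Real.log ε := Real.log_le_log (by linarith) (by linarith)
        have k0 : (Real.log (-b))⁻¹ ≤ 0 := inv_nonpos.2 hlb.le
        have k1 : (-Real.log (-a))⁻¹ ≤ (-Real.log ε)⁻¹ :=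
          inv_anti₀ hlogε0 (by linarith)
        have k2 : (-Real.log (-a))⁻¹ = -(Real.log (-a))⁻¹ := by rw [inv_neg]
        rw [hB1]
        linarith
    · -- positive small piece
      have hmono : ∫⁻ ξ in Ioo 0 ε, ENNReal.ofReal
          ((‖Complex.log ((ξ:ℂ) + η * Complex.I) - Complex.log l‖ ^ 2
            * ‖(ξ:ℂ) + η * Complex.I‖)⁻¹)
          ≤ ∫⁻ ξ in Ioo 0 ε, ENNReal.ofReal (4 * (ξ * Real.log ξ ^ 2)⁻¹) := by
        refine setLIntegral_mono' measurableSet_Ioo fun ξ hξ => ENNReal.ofReal_le_ofReal ?_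
        have h := hsb ξ (ne_of_gt hξ.1) (by rw [abs_of_pos hξ.1]; exact hξ.2)
        rwa [abs_of_pos hξ.1] at h
      refine le_trans hmono ?_
      have hlne : ∀ x : ℝ, 0 < x → x < ε → Real.log x < 0 := by
        intro x h1 h2
        exact Real.log_neg h1 (by linarith [hεe2.trans he2lt1.le])
      have hlogcont : ContinuousOn (fun x : ℝ => Real.log x) (Ioo 0 ε) :=
        Real.continuousOn_log.mono (fun x hx => by
          simp only [Set.mem_compl_iff, Set.mem_singleton_iff]
          exact ne_of_gt hx.1)
      apply lint_Ioo_le hε (F := fun x => 4 * (-Real.log x)⁻¹)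
      · refine continuousOn_const.mul ((continuousOn_id.mul (hlogcont.pow 2)).inv₀
          fun x hx => ?_)
        have := hlne x hx.1 hx.2
        exact ne_of_gt (mul_pos hx.1 (by simp only [Pi.pow_apply]; nlinarith))
      · intro x hx
        exact mul_nonneg (by norm_num)
          (inv_nonneg.2 (mul_nonneg hx.1.le (sq_nonneg _)))
      · intro x hx
        have hx0 : 0 < x := hx.1
        have hlx : Real.log x < 0 := hlne x hx.1 hx.2
        have hlgne : -Real.log x ≠ 0 := by linarith
        have d2 : HasDerivAt (fun y : ℝ => -Real.log y) (-x⁻¹) x :=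
          (Real.hasDerivAt_log (ne_of_gt hx0)).neg
        have d3 := (d2.inv hlgne).const_mul (4:ℝ)
        refine d3.congr_deriv ?_
        have hx' : x ≠ 0 := ne_of_gt hx0
        have hlx' : Real.log x ≠ 0 := ne_of_lt hlx
        field_simp
      · intro a b ha hab hb
        have hla : Real.log a < 0 := hlne a ha (lt_of_le_of_lt hab hb)
        have hlb : Real.log b < 0 := hlne b (by linarith) hb
        have hlbε : Real.log b ≤ Real.log ε := Real.log_le_log (by linarith) (by linarith)
        have k1 : (-Real.log b)⁻¹ ≤ (-Real.log ε)⁻¹ :=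
          inv_anti₀ hlogε0 (by linarith)
        have k2 : (0:ℝ) ≤ (-Real.log a)⁻¹ := inv_nonneg.2 (by linarith)
        rw [hB1]
        linarith
  -- assemble
  have hset : Iio (-R) ∪ Icc (-R) (-ε) ∪ Ioo (-ε) ε ∪ Icc ε R ∪ Ioi R = (univ : Set ℝ) := by
    ext x
    simp only [mem_union, mem_Iio, mem_Icc, mem_Ioo, mem_Ioi, mem_univ, iff_true]
    by_cases h1 : x < -R
    · exact Or.inl (Or.inl (Or.inl (Or.inl h1)))
    push_neg at h1
    by_cases h2 : x ≤ -ε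
    · exact Or.inl (Or.inl (Or.inl (Or.inr ⟨h1, h2⟩)))
    push_neg at h2
    by_cases h3 : x < ε
    · exact Or.inl (Or.inl (Or.inr ⟨h2, h3⟩))
    push_neg at h3
    by_cases h4 : x ≤ R
    · exact Or.inl (Or.inr ⟨h3, h4⟩)
    push_neg at h4
    exact Or.inr h4
  rw [← setLIntegral_univ, ← hset]
  have hsum : ENNReal.ofReal B3 + ENNReal.ofReal (K * (R - ε)) + ENNReal.ofReal (B1 + B1)
      + ENNReal.ofReal (K * (R - ε)) + ENNReal.ofReal B3
      = ENNReal.ofReal (B3 + K * (R - ε) + (B1 + B1) + K * (R - ε) + B3) := by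
    rw [← ENNReal.ofReal_add hB30 hKR0,
      ← ENNReal.ofReal_add (add_nonneg hB30 hKR0) (add_nonneg hB10 hB10),
      ← ENNReal.ofReal_add (add_nonneg (add_nonneg hB30 hKR0) (add_nonneg hB10 hB10)) hKR0,
      ← ENNReal.ofReal_add (add_nonneg (add_nonneg (add_nonneg hB30 hKR0)
        (add_nonneg hB10 hB10)) hKR0) hB30]
  refine le_trans ?_ (le_of_eq hsum)
  refine le_trans (lintegral_union_le _ _ _) ?_
  refine add_le_add ?_ hI5
  refine le_trans (lintegral_union_le _ _ _) ?_
  refine add_le_add ?_ hI4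
  refine le_trans (lintegral_union_le _ _ _) ?_
  refine add_le_add ?_ hI3
  refine le_trans (lintegral_union_le _ _ _) ?_
  exact add_le_add hI1 hI2
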